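/- For H ∈ C(Ω̄ × Ω̄) with H(x,y) ≤ −H(y,x), define L_H(x,p) = sup_{y ∈ Ω̄} {⟨y,p⟩ − H(y,x)} and its restricted Fenchel dual L_H*(q,y) = sup_{x ∈ Ω̄, p ∈ B_R} {⟨y,p⟩ + ⟨q,x⟩ − L_H(x,p)}. Then L_H*(p,x) ≤ L_H(x,p) for all x ∈ Ω̄ and p ∈ B_R. -/

import Mathlib

open MeasureTheory Set

noncomputable section

variable {N : ℕ}

/-- `L_H(x,p) = sup_{y ∈ Ω̄} {⟨y,p⟩ - H(y,x)}`. -/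
def LH (Ω : Set (EuclideanSpace ℝ (Fin N)))
    (H : EuclideanSpace ℝ (Fin N) → EuclideanSpace ℝ (Fin N) → ℝ)
    (x p : EuclideanSpace ℝ (Fin N)) : ℝ :=
  ⨆ y : closure Ω, ((inner ℝ (y : EuclideanSpace ℝ (Fin N)) p : ℝ) - H y x)

/-- Restricted Fenchel dual `L_H*(q,y) = sup_{x ∈ Ω̄, p ∈ B_R} {⟨y,p⟩ + ⟨q,x⟩ - L_H(x,p)}`. -/
def LHstar (Ω : Set (EuclideanSpace ℝ (Fin N))) (R : ℝ)
    (H : EuclideanSpace ℝ (Fin N) → EuclideanSpace ℝ (Fin N) → ℝ)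
    (q y : EuclideanSpace ℝ (Fin N)) : ℝ :=
  ⨆ x : closure Ω, ⨆ p : Metric.closedBall (0 : EuclideanSpace ℝ (Fin N)) R,
    ((inner ℝ y (p : EuclideanSpace ℝ (Fin N)) : ℝ)
      + (inner ℝ q (x : EuclideanSpace ℝ (Fin N)) : ℝ) - LH Ω H x p)

/-- `L_H**(y,q) = sup_{x ∈ Ω̄, p ∈ B_R} {⟨y,p⟩ + ⟨q,x⟩ - L_H*(p,x)}`. -/
def LHstarstar (Ω : Set (EuclideanSpace ℝ (Fin N))) (R : ℝ)
    (H : EuclideanSpace ℝ (Fin N) → EuclideanSpace ℝ (Fin N) → ℝ)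
    (y q : EuclideanSpace ℝ (Fin N)) : ℝ :=
  ⨆ x : closure Ω, ⨆ p : Metric.closedBall (0 : EuclideanSpace ℝ (Fin N)) R,
    ((inner ℝ y (p : EuclideanSpace ℝ (Fin N)) : ℝ)
      + (inner ℝ q (x : EuclideanSpace ℝ (Fin N)) : ℝ) - LHstar Ω R H p x)

/-- The `B_R`-Hamiltonian of `L`: `H_L(x,y) = sup_{p ∈ B_R} {⟨x,p⟩ - L(y,p)}`. -/
def HLB (R : ℝ)
    (L : EuclideanSpace ℝ (Fin N) → EuclideanSpace ℝ (Fin N) → ℝ)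
    (x y : EuclideanSpace ℝ (Fin N)) : ℝ :=
  ⨆ p : Metric.closedBall (0 : EuclideanSpace ℝ (Fin N)) R,
    ((inner ℝ x (p : EuclideanSpace ℝ (Fin N)) : ℝ) - L y p)

end

open Metric in
/-- Lemma 2.7 (first part): if `H(x,y) ≤ -H(y,x)` on `Ω̄ × Ω̄`, then
`L_H*(p,x) ≤ L_H(x,p)` for all `x ∈ Ω̄`, `p ∈ B_R`. -/
theorem LHstar_le_LH {N : ℕ} (R : ℝ) (hR : 0 < R)
    (Ω : Set (EuclideanSpace ℝ (Fin N))) (hΩopen : IsOpen Ω)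
    (hΩ : Ω ⊆ Metric.closedBall (0 : EuclideanSpace ℝ (Fin N)) R)
    (hΩne : Ω.Nonempty)
    (H : EuclideanSpace ℝ (Fin N) → EuclideanSpace ℝ (Fin N) → ℝ)
    (hHcont : ContinuousOn (fun q : EuclideanSpace ℝ (Fin N) × EuclideanSpace ℝ (Fin N) =>
      H q.1 q.2) ((closure Ω) ×ˢ (closure Ω)))
    (hHskew : ∀ x ∈ closure Ω, ∀ y ∈ closure Ω, H x y ≤ - H y x) :
    ∀ x ∈ closure Ω, ∀ p ∈ Metric.closedBall (0 : EuclideanSpace ℝ (Fin N)) R,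
      LHstar Ω R H p x ≤ LH Ω H x p := by
  intro x hx p hp
  have hΩc : IsCompact (closure Ω) :=
    (Metric.isBounded_closedBall.subset hΩ).isCompact_closure
  haveI : CompactSpace (closure Ω) := isCompact_iff_compactSpace.mp hΩc
  haveI hne : Nonempty (closure Ω) := ⟨⟨x, hx⟩⟩
  haveI : Nonempty (Metric.closedBall (0 : EuclideanSpace ℝ (Fin N)) R) := ⟨⟨p, hp⟩⟩
  have hbdd : ∀ x' ∈ closure Ω, ∀ p' : EuclideanSpace ℝ (Fin N),
      BddAbove (Set.range fun y : closure Ω =>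
        (inner ℝ (y : EuclideanSpace ℝ (Fin N)) p' : ℝ) - H y x') := by
    intro x' hx' p'
    have hc : Continuous fun y : closure Ω =>
        (inner ℝ (y : EuclideanSpace ℝ (Fin N)) p' : ℝ) - H y x' := by
      apply Continuous.sub
      · exact continuous_subtype_val.inner continuous_const
      · exact hHcont.comp_continuous
          (continuous_subtype_val.prodMk continuous_const)
          (fun y => ⟨y.2, hx'⟩)
    exact (isCompact_range hc).bddAbove
  have key : ∀ x' ∈ closure Ω, ∀ p' : EuclideanSpace ℝ (Fin N),
      (inner ℝ x p' : ℝ) + (inner ℝ p x' : ℝ) - LH Ω H x' p' ≤ LH Ω H x p := by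
    intro x' hx' p'
    have h1 : (inner ℝ x p' : ℝ) - H x x' ≤ LH Ω H x' p' :=
      le_ciSup (hbdd x' hx' p') ⟨x, hx⟩
    have h2 : (inner ℝ (x' : EuclideanSpace ℝ (Fin N)) p : ℝ) - H x' x ≤ LH Ω H x p :=
      le_ciSup (hbdd x hx p) ⟨x', hx'⟩
    have h3 : H x x' ≤ - H x' x := hHskew x hx x' hx'
    have h4 : (inner ℝ p x' : ℝ) = (inner ℝ (x' : EuclideanSpace ℝ (Fin N)) p : ℝ) :=
      real_inner_comm _ _
    linarith
  unfold LHstar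
  refine ciSup_le fun x' => ciSup_le fun p' => ?_
  exact key x' x'.2 p'
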